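/- A finitely generated virtually abelian group H has a finite-index subgroup isomorphic to ℤ^k for some k ∈ ℕ; moreover, the growth of H is polynomial of degree exactly k. -/

import Mathlib

/-- The ball of radius m in H with respect to a choice of generators σ. -/
def ball {H : Type*} [Group H] {X : Type*} (σ : FreeMonoid X →* H) (m : ℕ) : Set H :=
  {h : H | ∃ w : FreeMonoid X, σ w = h ∧ w.length ≤ m}




noncomputable def tau {H : Type*} [Group H] (L : Subgroup H) (g : H) : H :=
  (Quotient.mk (QuotientGroup.rightRel L) g).out

lemma tau_spec {H : Type*} [Group H] (L : Subgroup H) (g : H) : g * (tau L g)⁻¹ ∈ L := by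
  have h := @Quotient.exact _ (QuotientGroup.rightRel L) _ _
    ((Quotient.mk (QuotientGroup.rightRel L) g).out_eq)
  exact (QuotientGroup.rightRel_apply).mp h

lemma tau_mul_mem {H : Type*} [Group H] (L : Subgroup H) {l : H} (hl : l ∈ L) (g : H) :
    tau L (l * g) = tau L g := by
  unfold tau
  congr 1
  refine Quotient.sound ?_
  refine (QuotientGroup.rightRel_apply).mpr ?_
  simpa using hl

noncomputable def coord {H : Type*} [Group H] {L : Subgroup H} {k : ℕ}
    (φ : L ≃* Multiplicative (Fin k → ℤ)) (g : H) : Fin k → ℤ :=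
  Multiplicative.toAdd (φ ⟨g * (tau L g)⁻¹, tau_spec L g⟩)

lemma coord_mul {H : Type*} [Group H] {L : Subgroup H} {k : ℕ}
    (φ : L ≃* Multiplicative (Fin k → ℤ)) (g x : H) :
    coord φ (g * x) = coord φ g + coord φ (tau L g * x) := by
  have h1 : tau L (g * x) = tau L (tau L g * x) := by
    conv_lhs => rw [show g * x = (g * (tau L g)⁻¹) * (tau L g * x) by group]
    exact tau_mul_mem L (tau_spec L g) _
  have h2 : (⟨(g * x) * (tau L (g * x))⁻¹, tau_spec L _⟩ : L) =
      ⟨g * (tau L g)⁻¹, tau_spec L g⟩ * ⟨(tau L g * x) * (tau L (tau L g * x))⁻¹, tau_spec L _⟩ := by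
    ext
    simp only [Subgroup.coe_mul, h1]
    group
  unfold coord
  rw [h2, map_mul, toAdd_mul]

lemma coord_inj {H : Type*} [Group H] {L : Subgroup H} {k : ℕ}
    (φ : L ≃* Multiplicative (Fin k → ℤ)) {g g' : H}
    (h1 : coord φ g = coord φ g')
    (h2 : Quotient.mk (QuotientGroup.rightRel L) g = Quotient.mk (QuotientGroup.rightRel L) g') :
    g = g' := by
  have ht : tau L g = tau L g' := by unfold tau; rw [h2]
  unfold coord at h1
  have := φ.injective (Multiplicative.toAdd.injective h1)
  rw [Subtype.ext_iff] at this
  simp only [ht] at this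
  exact mul_right_cancel this

open FreeMonoid in
lemma coord_bound {H : Type*} [Group H] {L : Subgroup H} {k : ℕ}
    (φ : L ≃* Multiplicative (Fin k → ℤ)) {X : Type} (σ : FreeMonoid X →* H)
    (C : ℕ)
    (hC1 : ∀ i, |coord φ (1 : H) i| ≤ C)
    (hC2 : ∀ (g : H) (x : X) (i : Fin k), |coord φ (tau L g * σ (FreeMonoid.of x)) i| ≤ C) :
    ∀ (w : FreeMonoid X) (i : Fin k), |coord φ (σ w) i| ≤ C * (w.length + 1) := by
  have key : ∀ (l : List X) (i : Fin k),
      |coord φ (σ (ofList l)) i| ≤ C * (l.length + 1) := by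
    intro l
    induction l using List.reverseRecOn with
    | nil =>
      intro i
      simpa using hC1 i
    | append_singleton l x ih =>
      intro i
      rw [ofList_append, map_mul, coord_mul]
      calc |coord φ (σ (ofList l)) i + coord φ (tau L (σ (ofList l)) * σ (ofList [x])) i|
          ≤ |coord φ (σ (ofList l)) i| + |coord φ (tau L (σ (ofList l)) * σ (ofList [x])) i| :=
            abs_add_le _ _
        _ ≤ C * (l.length + 1) + C := by
            have := hC2 (σ (ofList l)) x i
            rw [ofList_singleton]
            exact add_le_add (ih i) this
        _ ≤ C * ((l ++ [x]).length + 1) := by simp; ring_nf; omega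
  intro w i
  exact key (toList w) i

lemma ball_finite {H : Type*} [Group H] {X : Type} [Fintype X] (σ : FreeMonoid X →* H) (m : ℕ) :
    (ball σ m).Finite := by
  have h : ball σ m ⊆ σ '' {w : FreeMonoid X | w.length ≤ m} := by
    rintro h ⟨w, hw, hlen⟩
    exact ⟨w, hlen, hw⟩
  have hfin : {w : FreeMonoid X | w.length ≤ m}.Finite := List.finite_length_le X m
  exact (hfin.image σ).subset h

lemma upper_bound {H : Type*} [Group H] {L : Subgroup H} {k : ℕ} (hLi : L.index ≠ 0)
    (φ : L ≃* Multiplicative (Fin k → ℤ)) (X : Type) [Fintype X] (σ : FreeMonoid X →* H) :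
    ∃ C : ℕ, 0 < C ∧ ∀ m : ℕ, (ball σ m).ncard ≤ C * (m + 1) ^ k := by
  set Q := Quotient (QuotientGroup.rightRel L) with hQ
  have hfinQ : Finite (H ⧸ L) := by
    have h : Nat.card (H ⧸ L) ≠ 0 := hLi
    exact (Nat.card_ne_zero.mp h).2
  have : Finite Q := Finite.of_equiv _ (QuotientGroup.quotientRightRelEquivQuotientLeftRel L).symm
  have : Fintype Q := Fintype.ofFinite Q
  set C₀ : ℕ := (Finset.univ.sup fun i : Fin k => (coord φ (1 : H) i).natAbs) ⊔
      (Finset.univ.sup fun qxi : Q × X × Fin k =>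
        (coord φ (qxi.1.out * σ (FreeMonoid.of qxi.2.1)) qxi.2.2).natAbs) with hC₀
  have hC1 : ∀ i, |coord φ (1 : H) i| ≤ C₀ := by
    intro i
    rw [Int.abs_eq_natAbs]
    have hle : (coord φ (1 : H) i).natAbs ≤ C₀ := le_sup_of_le_left
      (Finset.le_sup (f := fun i : Fin k => (coord φ (1 : H) i).natAbs) (Finset.mem_univ i))
    exact_mod_cast hle
  have hC2 : ∀ (g : H) (x : X) (i : Fin k), |coord φ (tau L g * σ (FreeMonoid.of x)) i| ≤ C₀ := by
    intro g x i
    rw [Int.abs_eq_natAbs]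
    have : tau L g = (Quotient.mk (QuotientGroup.rightRel L) g).out := rfl
    rw [this]
    have hle : (coord φ ((Quotient.mk (QuotientGroup.rightRel L) g).out * σ (FreeMonoid.of x)) i).natAbs ≤ C₀ :=
      le_sup_of_le_right
        (Finset.le_sup (f := fun qxi : Q × X × Fin k =>
          (coord φ (qxi.1.out * σ (FreeMonoid.of qxi.2.1)) qxi.2.2).natAbs)
          (Finset.mem_univ ((Quotient.mk (QuotientGroup.rightRel L) g), x, i)))
    exact_mod_cast hle
  refine ⟨Nat.card Q * (2 * C₀ + 1) ^ k, ?_, ?_⟩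
  · have : Nat.card Q ≠ 0 := Nat.card_ne_zero.mpr ⟨⟨Quotient.mk _ 1⟩, inferInstance⟩
    positivity
  intro m
  -- injection
  set B : ℤ := ((C₀ * (m + 1) : ℕ) : ℤ) with hB
  set T := (Fin k → (Finset.Icc (-B) B : Finset ℤ)) × Q with hT
  have hmem : ∀ g ∈ ball σ m, ∀ i, coord φ g i ∈ Finset.Icc (-B) B := by
    rintro g ⟨w, hw, hlen⟩ i
    rw [Finset.mem_Icc, ← abs_le]
    calc |coord φ g i| = |coord φ (σ w) i| := by rw [hw]
      _ ≤ C₀ * (w.length + 1) := coord_bound φ σ C₀ hC1 hC2 w i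
      _ ≤ (C₀ * (m + 1) : ℕ) := by exact_mod_cast Nat.mul_le_mul_left _ (by omega)
  set F : ball σ m → T := fun g =>
    (fun i => ⟨coord φ g.1 i, hmem g.1 g.2 i⟩, Quotient.mk _ g.1) with hF
  have hinj : Function.Injective F := by
    rintro a b hab
    rw [Prod.ext_iff] at hab
    obtain ⟨h1, h2⟩ := hab
    refine Subtype.ext (coord_inj φ ?_ h2)
    funext i
    exact congrArg Subtype.val (congrFun h1 i)
  have hcard : (ball σ m).ncard ≤ Nat.card T := by
    rw [← Nat.card_coe_set_eq]
    exact Nat.card_le_card_of_injective F hinj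
  refine le_trans hcard ?_
  have hIcc : Nat.card (Finset.Icc (-B) B : Finset ℤ) = 2 * (C₀ * (m + 1)) + 1 := by
    rw [Nat.card_eq_fintype_card, Fintype.card_coe, Int.card_Icc]
    have : B + 1 - (-B) = ((2 * (C₀ * (m + 1)) + 1 : ℕ) : ℤ) := by push_cast [hB]; ring
    rw [this, Int.toNat_natCast]
  have : Nat.card T = (2 * (C₀ * (m + 1)) + 1) ^ k * Nat.card Q := by
    rw [hT, Nat.card_prod, Nat.card_fun, hIcc, Nat.card_eq_fintype_card (α := Fin k),
      Fintype.card_fin]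
  rw [this]
  have h1 : 2 * (C₀ * (m + 1)) + 1 ≤ (2 * C₀ + 1) * (m + 1) := by ring_nf; omega
  calc (2 * (C₀ * (m + 1)) + 1) ^ k * Nat.card Q
      ≤ ((2 * C₀ + 1) * (m + 1)) ^ k * Nat.card Q :=
        Nat.mul_le_mul_right _ (Nat.pow_le_pow_left h1 k)
    _ = Nat.card Q * (2 * C₀ + 1) ^ k * (m + 1) ^ k := by rw [mul_pow]; ring

def lenHom {X : Type*} : FreeMonoid X →* Multiplicative ℕ where
  toFun w := Multiplicative.ofAdd w.length
  map_one' := rfl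
  map_mul' a b := congrArg Multiplicative.ofAdd (FreeMonoid.length_mul a b)

lemma length_pow {X : Type*} (w : FreeMonoid X) (n : ℕ) :
    (w ^ n).length = n * w.length := by
  have h := map_pow (lenHom (X := X)) w n
  have := congrArg Multiplicative.toAdd h
  exact this

lemma lower_bound {H : Type*} [Group H] {L : Subgroup H} {k : ℕ}
    (φ : L ≃* Multiplicative (Fin k → ℤ)) (X : Type) [Fintype X]
    (σ : FreeMonoid X →* H) (hσ : Function.Surjective σ) :
    ∃ C : ℕ, 0 < C ∧ ∀ m : ℕ, m ^ k ≤ C * (ball σ m).ncard := by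
  set ψ : Multiplicative (Fin k → ℤ) →* H := L.subtype.comp φ.symm.toMonoidHom with hψ
  have hψinj : Function.Injective ψ := by
    intro a b hab
    exact φ.symm.injective (Subtype.coe_injective hab)
  choose w hw using fun i : Fin k => hσ (ψ (Multiplicative.ofAdd (Pi.single i 1)))
  set N : ℕ := (∑ i : Fin k, (w i).length) + 1 with hN
  refine ⟨N ^ k, pow_pos (by omega) k, ?_⟩
  intro m
  set r : ℕ := m / N with hr
  set W : (Fin k → Fin (r + 1)) → FreeMonoid X :=
    fun a => (List.ofFn (fun i => (w i) ^ (a i : ℕ))).prod with hW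
  have hFval : ∀ a : Fin k → Fin (r + 1),
      σ (W a) = ψ (Multiplicative.ofAdd (fun i => ((a i : ℕ) : ℤ))) := by
    intro a
    have step : ∀ i : Fin k, σ ((w i) ^ (a i : ℕ)) =
        ψ (Multiplicative.ofAdd (Pi.single i ((a i : ℕ) : ℤ))) := by
      intro i
      rw [map_pow, hw i, ← map_pow]
      congr 1
      rw [← ofAdd_nsmul]
      congr 1
      ext j
      rw [Pi.smul_apply, Pi.single_apply, Pi.single_apply]
      split <;> simp
    calc σ (W a) = (List.ofFn fun i => σ ((w i) ^ (a i : ℕ))).prod := by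
          rw [hW, map_list_prod, List.map_ofFn]
          simp only [Function.comp_def]
      _ = (List.ofFn fun i => ψ (Multiplicative.ofAdd (Pi.single i ((a i : ℕ) : ℤ)))).prod := by
          rw [funext step]
      _ = ψ ((List.ofFn fun i => Multiplicative.ofAdd (Pi.single i ((a i : ℕ) : ℤ))).prod) := by
          rw [map_list_prod, List.map_ofFn]
          simp only [Function.comp_def]
      _ = ψ (Multiplicative.ofAdd fun i => ((a i : ℕ) : ℤ)) := by
          rw [Fin.prod_ofFn, ← ofAdd_sum]
          congr 1
          exact Finset.univ_sum_single fun i => ((a i : ℕ) : ℤ)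
  have hlen : ∀ a : Fin k → Fin (r + 1), (W a).length ≤ m := by
    intro a
    have h1 : lenHom (W a) = Multiplicative.ofAdd (∑ i : Fin k, (a i : ℕ) * (w i).length) := by
      rw [hW, map_list_prod, List.map_ofFn]
      simp only [Function.comp_def]
      rw [Fin.prod_ofFn]
      have hstep : ∀ i : Fin k, lenHom ((w i) ^ (a i : ℕ)) =
          Multiplicative.ofAdd ((a i : ℕ) * (w i).length) := by
        intro i
        show Multiplicative.ofAdd (((w i) ^ ((a i : ℕ))).length) = _
        rw [length_pow]
      rw [Finset.prod_congr rfl fun i _ => hstep i, ← ofAdd_sum]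
    have h2 : (W a).length = ∑ i : Fin k, (a i : ℕ) * (w i).length :=
      congrArg Multiplicative.toAdd h1
    rw [h2]
    have h3 : ∑ i : Fin k, (a i : ℕ) * (w i).length ≤ ∑ i : Fin k, r * (w i).length := by
      refine Finset.sum_le_sum fun i _ => Nat.mul_le_mul_right _ ?_
      exact Nat.lt_succ_iff.mp (a i).isLt
    refine le_trans h3 ?_
    rw [← Finset.mul_sum]
    calc r * (∑ i : Fin k, (w i).length) ≤ r * N := Nat.mul_le_mul_left _ (by omega)
      _ = (m / N) * N := by rw [hr]
      _ ≤ m := Nat.div_mul_le_self m N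
  have hballfin : (ball σ m).Finite := ball_finite σ m
  have := hballfin.to_subtype
  set F : (Fin k → Fin (r + 1)) → ↥(ball σ m) := fun a => ⟨σ (W a), W a, rfl, hlen a⟩ with hF
  have hFinj : Function.Injective F := by
    intro a b hab
    have h := congrArg Subtype.val hab
    simp only [hF] at h
    rw [hFval, hFval] at h
    have := Multiplicative.ofAdd.injective (hψinj h)
    funext i
    have hi := congrFun this i
    exact Fin.ext (by exact_mod_cast hi)
  have hcount : (r + 1) ^ k ≤ (ball σ m).ncard := by
    rw [← Nat.card_coe_set_eq]
    calc (r + 1) ^ k = Nat.card (Fin k → Fin (r + 1)) := by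
          rw [Nat.card_fun, Nat.card_eq_fintype_card (α := Fin (r+1)),
            Nat.card_eq_fintype_card (α := Fin k), Fintype.card_fin, Fintype.card_fin]
      _ ≤ Nat.card ↥(ball σ m) := Nat.card_le_card_of_injective F hFinj
  have hm : m ≤ N * (r + 1) := by
    have h2 : m % N ≤ N := (Nat.mod_lt m (show 0 < N by omega)).le
    calc m = N * (m / N) + m % N := (Nat.div_add_mod m N).symm
      _ ≤ N * (m / N) + N := Nat.add_le_add_left h2 _
      _ = N * (m / N + 1) := by ring
      _ = N * (r + 1) := by rw [hr]
  calc m ^ k ≤ (N * (r + 1)) ^ k := Nat.pow_le_pow_left hm k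
    _ = N ^ k * (r + 1) ^ k := mul_pow N (r+1) k
    _ ≤ N ^ k * (ball σ m).ncard := Nat.mul_le_mul_left _ hcount


/-- A finitely generated virtually abelian group has a finite-index subgroup
isomorphic to ℤ^k for some k, and its growth is polynomial of degree exactly k. -/
theorem virtually_abelian_structure_and_growth {H : Type*} [Group H]
    (hfg : Group.FG H) (K : Subgroup H) (hKi : K.index ≠ 0)
    (hKab : ∀ x y : K, x * y = y * x) :
    ∃ (k : ℕ) (L : Subgroup H), L.index ≠ 0 ∧
      Nonempty (L ≃* Multiplicative (Fin k → ℤ)) ∧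
      ∀ (X : Type) (_ : Fintype X) (σ : FreeMonoid X →* H), Function.Surjective σ →
        ∃ C : ℕ, 0 < C ∧ ∀ m : ℕ,
          (ball σ m).ncard ≤ C * (m + 1) ^ k ∧ m ^ k ≤ C * (ball σ m).ncard := by
  letI : CommGroup K := { (inferInstance : Group K) with mul_comm := hKab }
  haveI : K.FiniteIndex := ⟨hKi⟩
  haveI : Group.FG H := hfg
  haveI : Group.FG K := Subgroup.fg_of_index_ne_zero K
  haveI : AddGroup.FG (Additive K) := GroupFG.iff_add_fg.mp inferInstance
  obtain ⟨n, ι, fι, p, hp, e, ⟨f⟩⟩ := AddCommGroup.equiv_free_prod_directSum_zmod (Additive K)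
  haveI : ∀ i, NeZero (p i ^ e i) := fun i => ⟨pow_ne_zero _ (hp i).pos.ne'⟩
  set D : Type := DirectSum ι (fun i => ZMod (p i ^ e i)) with hD
  haveI : Finite D := by
    have : Finite (∀ i : ι, ZMod (p i ^ e i)) := inferInstance
    exact Finite.of_equiv _ (DFinsupp.equivFunOnFintype (ι := ι)).symm
  set e₂ : Additive K ≃+ (Fin n → ℤ) × D :=
    f.trans (AddEquiv.prodCongr Finsupp.addEquivFunOnFinite (AddEquiv.refl D)) with he₂
  set e' : K ≃* Multiplicative ((Fin n → ℤ) × D) := AddEquiv.toMultiplicativeRight e₂ with he'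
  set inl' : Multiplicative (Fin n → ℤ) →* Multiplicative ((Fin n → ℤ) × D) :=
    AddMonoidHom.toMultiplicative (AddMonoidHom.inl _ _) with hinl'
  have hinlinj : Function.Injective inl' := by
    intro a b hab
    have := congrArg (fun z => (Multiplicative.toAdd z).1) hab
    exact Multiplicative.ofAdd.injective this
  set ρ : Multiplicative (Fin n → ℤ) →* K := e'.symm.toMonoidHom.comp inl' with hρ
  have hρinj : Function.Injective ρ := e'.symm.injective.comp hinlinj
  set j : Multiplicative (Fin n → ℤ) →* H := K.subtype.comp ρ with hj
  have hjinj : Function.Injective j := K.subtype_injective.comp hρinj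
  have hidx : j.range.index ≠ 0 := by
    have hle : j.range ≤ K := by rintro x ⟨a, rfl⟩; exact (ρ a).2
    have hsub : j.range.subgroupOf K = ρ.range := by
      rw [hj, MonoidHom.range_comp]
      exact Subgroup.comap_map_eq_self_of_injective K.subtype_injective _
    set snd' : Multiplicative ((Fin n → ℤ) × D) →* Multiplicative D :=
      AddMonoidHom.toMultiplicative (AddMonoidHom.snd _ _) with hsnd'
    have hinlker : inl'.range = snd'.ker := by
      ext x
      constructor
      · rintro ⟨a, rfl⟩
        rfl
      · intro hx
        refine ⟨Multiplicative.ofAdd (Multiplicative.toAdd x).1, ?_⟩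
        have h2 : (Multiplicative.toAdd x).2 = 0 := hx
        apply Multiplicative.toAdd.injective
        exact Prod.ext rfl h2.symm
    have hρr : ρ.range = Subgroup.comap e'.toMonoidHom inl'.range := by
      ext x
      constructor
      · rintro ⟨a, rfl⟩
        exact ⟨a, by simp [hρ]⟩
      · rintro ⟨a, ha⟩
        refine ⟨a, ?_⟩
        show e'.symm (inl' a) = x
        rw [ha]
        exact e'.symm_apply_apply x
    have hρidx : ρ.range.index ≠ 0 := by
      have h1 : (Subgroup.comap e'.toMonoidHom inl'.range).index = inl'.range.index :=
        Subgroup.index_comap_of_surjective _ e'.surjective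
      rw [hρr, h1, hinlker, Subgroup.index_ker]
      exact Nat.card_ne_zero.mpr ⟨⟨1, 1, rfl⟩, inferInstance⟩
    have hmul := Subgroup.relIndex_mul_index hle
    have hrel : j.range.relIndex K ≠ 0 := by
      rw [Subgroup.relIndex, hsub]
      exact hρidx
    rw [← hmul]
    exact mul_ne_zero hrel hKi
  refine ⟨n, j.range, hidx, ⟨(MonoidHom.ofInjective hjinj).symm⟩, ?_⟩
  intro X hX σ hσ
  haveI := hX
  obtain ⟨C₁, hC₁, h₁⟩ := upper_bound hidx (MonoidHom.ofInjective hjinj).symm X σ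
  obtain ⟨C₂, hC₂, h₂⟩ := lower_bound (MonoidHom.ofInjective hjinj).symm X σ hσ
  refine ⟨max C₁ C₂, lt_of_lt_of_le hC₁ (le_max_left _ _), fun m => ⟨?_, ?_⟩⟩
  · exact le_trans (h₁ m) (Nat.mul_le_mul_right _ (le_max_left _ _))
  · exact le_trans (h₂ m) (Nat.mul_le_mul_right _ (le_max_right _ _))
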